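/- If the increment function ψ_h is symmetric (ψ_h(v,u) = ψ_h(u,v) in the sense appropriate for adjoint methods, i.e. ψ_{-h}(u,v) = ψ_h(v,u)) and each discrete gradient ∇̄H_j is symmetric (∇̄H_j(v,u) = ∇̄H_j(u,v)), then the projection method y^{n+1} = y^n + h P(y^n, y^{n+1}) ψ_h(y^n, y^{n+1}), with P(v,u) the orthogonal projection onto T_{(v,u)}M, is a symmetric (self-adjoint) one-step method: exchanging y^n ↔ y^{n+1} and h ↔ −h leaves the defining equation invariant. -/

import Mathlib

/-- If the increment function `ψ` is symmetric (`ψ_{-h}(u,v) = ψ_h(v,u)`) and the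
discrete gradients are symmetric, then the projected method
`y¹ = y⁰ + h P(y⁰,y¹) ψ_h(y⁰,y¹)`, with `P(v,u)` the orthogonal projection onto
the discrete tangent space, is symmetric: exchanging `y⁰ ↔ y¹`, `h ↔ -h` leaves
the defining equation invariant. -/
theorem stmt_10 {m q : ℕ}
    (dg : Fin q → EuclideanSpace ℝ (Fin m) → EuclideanSpace ℝ (Fin m) →
      EuclideanSpace ℝ (Fin m))
    (hdgsym : ∀ j v u, dg j v u = dg j u v)
    (ψ : ℝ → EuclideanSpace ℝ (Fin m) → EuclideanSpace ℝ (Fin m) →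
      EuclideanSpace ℝ (Fin m))
    (hψ : ∀ (h : ℝ) v u, ψ (-h) u v = ψ h v u) :
    ∀ (h : ℝ) (y₀ y₁ : EuclideanSpace ℝ (Fin m)),
      (y₁ = y₀ + h •
          (Submodule.orthogonalProjection ((Submodule.span ℝ (Set.range fun j => dg j y₀ y₁))ᗮ)
            (ψ h y₀ y₁) : EuclideanSpace ℝ (Fin m)))
        ↔
      (y₀ = y₁ + (-h) •
          (Submodule.orthogonalProjection ((Submodule.span ℝ (Set.range fun j => dg j y₁ y₀))ᗮ)
            (ψ (-h) y₁ y₀) : EuclideanSpace ℝ (Fin m))) := by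
  intro h y₀ y₁
  have hfun : (fun j => dg j y₁ y₀) = fun j => dg j y₀ y₁ := by
    funext j; exact hdgsym j y₁ y₀
  rw [hψ, hfun]
  set v : EuclideanSpace ℝ (Fin m) :=
    (Submodule.orthogonalProjection ((Submodule.span ℝ (Set.range fun j => dg j y₀ y₁))ᗮ)
      (ψ h y₀ y₁) : EuclideanSpace ℝ (Fin m))
  constructor
  · intro h1; rw [h1, neg_smul]; abel
  · intro h0; rw [h0, neg_smul]; abel
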